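/- arXiv:1709.01849 — 2 statements merged into one kernel-verified Lean document; each statement's English description precedes it below -/
import Mathlib

section
/- Let K be a finite Kripke structure, ρ and ρ' be two tracks over K, and ψ be a formula of the HS fragment AĀBB̄Ē with nestB(ψ)=k. If ρ ∼k ρ' (ρ and ρ' have the same B_k-descriptor), then K,ρ ⊨ ψ if and only if K,ρ' ⊨ ψ. -/
open Classical

universe u v

structure KripkeStructure (AP : Type u) (W : Type v) where
  delta : W → W → Prop
  leftTotal : ∀ w, ∃ w', delta w w'
  mu : W → Set AP
  init : W

variable {AP : Type u} {W : Type v}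

/-- A track over a Kripke structure: a finite sequence of at least two states
respecting the transition relation. -/
def IsTrack (K : KripkeStructure AP W) (ρ : List W) : Prop :=
  2 ≤ ρ.length ∧ ρ.Chain' K.delta

/-- `σ` is a proper prefix (of length at least 2) of `ρ`, i.e. `σ ∈ Pref(ρ)`. -/
def ProperPrefix (σ ρ : List W) : Prop :=
  σ <+: ρ ∧ σ ≠ ρ ∧ 2 ≤ σ.length

/-- `σ` is a proper suffix (of length at least 2) of `ρ`, i.e. `σ ∈ Suff(ρ)`. -/
def ProperSuffix (σ ρ : List W) : Prop :=
  σ <:+ ρ ∧ σ ≠ ρ ∧ 2 ≤ σ.length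

/-- Formulas of the HS fragment AĀBB̄Ē. -/
inductive HSFormula (AP : Type u) : Type u where
  | prop (p : AP)
  | neg (φ : HSFormula AP)
  | and (φ ψ : HSFormula AP)
  | modA (φ : HSFormula AP)
  | modAbar (φ : HSFormula AP)
  | modB (φ : HSFormula AP)
  | modBbar (φ : HSFormula AP)
  | modEbar (φ : HSFormula AP)

/-- Satisfaction of an HS formula by a track, under the homogeneity assumption. -/
def sat (K : KripkeStructure AP W) : HSFormula AP → List W → Prop
  | .prop p, ρ => ∀ w ∈ ρ, p ∈ K.mu w
  | .neg φ, ρ => ¬ sat K φ ρ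
  | .and φ ψ, ρ => sat K φ ρ ∧ sat K ψ ρ
  | .modA φ, ρ => ∃ σ, IsTrack K σ ∧ σ.head? = ρ.getLast? ∧ sat K φ σ
  | .modAbar φ, ρ => ∃ σ, IsTrack K σ ∧ σ.getLast? = ρ.head? ∧ sat K φ σ
  | .modB φ, ρ => ∃ σ, ProperPrefix σ ρ ∧ sat K φ σ
  | .modBbar φ, ρ => ∃ σ, IsTrack K σ ∧ ProperPrefix ρ σ ∧ sat K φ σ
  | .modEbar φ, ρ => ∃ σ, IsTrack K σ ∧ ProperSuffix ρ σ ∧ sat K φ σ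

/-- The B-nesting depth of an AĀBB̄Ē formula. -/
def nestB : HSFormula AP → ℕ
  | .prop _ => 0
  | .neg φ => nestB φ
  | .and φ ψ => max (nestB φ) (nestB ψ)
  | .modA φ => nestB φ
  | .modAbar φ => nestB φ
  | .modB φ => 1 + nestB φ
  | .modBbar φ => nestB φ
  | .modEbar φ => nestB φ

/-- A descriptor element: (initial state, set of internal states, final state). -/
abbrev DescEl (W : Type v) : Type v := W × Set W × W

noncomputable def headW [Nonempty W] (ρ : List W) : W :=
  ρ.headD (Classical.arbitrary W)

noncomputable def lastW [Nonempty W] (ρ : List W) : W :=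
  ρ.getLastD (Classical.arbitrary W)

/-- The set of internal states of a track. -/
def intStates (ρ : List W) : Set W := {w | w ∈ (ρ.drop 1).dropLast}

/-- The descriptor element associated with a track. -/
noncomputable def descEl [Nonempty W] (ρ : List W) : DescEl W :=
  (headW ρ, intStates ρ, lastW ρ)

/-- The type of B_k-descriptors (trees of depth `k` represented hereditarily as
sets of subtrees, which identifies isomorphic descriptors). -/
def BDesc (W : Type v) : ℕ → Type v
  | 0 => DescEl W
  | k + 1 => DescEl W × Set (BDesc W k)

/-- The B_k-descriptor of a track: the root is labelled by the descriptor element of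
the track and, for `k > 0`, the subtrees of the root are exactly (one copy each)
the B_(k-1)-descriptors of the proper prefixes of the track. Two tracks are
k-descriptor equivalent (`ρ ∼k ρ'`) iff `bDesc k ρ = bDesc k ρ'`. -/
noncomputable def bDesc [Nonempty W] : (k : ℕ) → List W → BDesc W k
  | 0, ρ => descEl ρ
  | k + 1, ρ => (descEl ρ, {d | ∃ σ, ProperPrefix σ ρ ∧ d = bDesc k σ})


set_option linter.unusedSectionVars false

section DescriptorLemmas

variable [Nonempty W]

lemma exists_cons_of_two_le {ρ : List W} (h : 2 ≤ ρ.length) :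
    ∃ a l, ρ = a :: l ∧ l ≠ [] := by
  match ρ, h with
  | a :: b :: l, _ => exact ⟨a, b :: l, rfl, by simp⟩

lemma head?_eq_headW {ρ : List W} (h : ρ ≠ []) : ρ.head? = some (headW ρ) := by
  cases ρ with
  | nil => simp at h
  | cons a l => rfl

lemma getLast?_eq_lastW {ρ : List W} (h : ρ ≠ []) : ρ.getLast? = some (lastW ρ) := by
  rw [List.getLast?_eq_getLast h]
  simp [lastW, List.getLastD_eq_getLast?, List.getLast?_eq_getLast h]

lemma getLast_eq_lastW {ρ : List W} (h : ρ ≠ []) : ρ.getLast h = lastW ρ := by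
  have h1 := getLast?_eq_lastW h
  rw [List.getLast?_eq_getLast h] at h1
  exact Option.some.inj h1

lemma head?_congr {ρ ρ' : List W} (h : ρ ≠ []) (h' : ρ' ≠ []) (he : headW ρ = headW ρ') :
    ρ.head? = ρ'.head? := by rw [head?_eq_headW h, head?_eq_headW h', he]

lemma getLast?_congr {ρ ρ' : List W} (h : ρ ≠ []) (h' : ρ' ≠ []) (he : lastW ρ = lastW ρ') :
    ρ.getLast? = ρ'.getLast? := by rw [getLast?_eq_lastW h, getLast?_eq_lastW h', he]

lemma mem_last_iff {l : List W} (hl : l ≠ []) {w : W} :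
    w ∈ l ↔ w ∈ l.dropLast ∨ w = lastW l := by
  conv_lhs => rw [← List.dropLast_append_getLast hl]
  rw [getLast_eq_lastW hl]
  simp

lemma mem_dropLast_iff {ρ : List W} (h : 2 ≤ ρ.length) {w : W} :
    w ∈ ρ.dropLast ↔ w = headW ρ ∨ w ∈ intStates ρ := by
  obtain ⟨a, l, rfl, hl⟩ := exists_cons_of_two_le h
  have hdl : (a :: l).dropLast = a :: l.dropLast := by
    cases l with
    | nil => simp at hl
    | cons b t => rfl
  rw [hdl]
  simp [headW, intStates]

lemma lastW_cons {a : W} {l : List W} (hl : l ≠ []) : lastW (a :: l) = lastW l := by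
  have h1 : (a :: l : List W) ≠ [] := by simp
  have := getLast?_eq_lastW h1
  rw [show (a :: l).getLast? = l.getLast? from by
      conv_lhs => rw [show a :: l = [a] ++ l from rfl]
      exact List.getLast?_append_of_ne_nil [a] hl,
    getLast?_eq_lastW hl] at this
  exact (Option.some.inj this).symm

lemma mem_drop_one_iff {ρ : List W} (h : 2 ≤ ρ.length) {w : W} :
    w ∈ ρ.drop 1 ↔ w ∈ intStates ρ ∨ w = lastW ρ := by
  obtain ⟨a, l, rfl, hl⟩ := exists_cons_of_two_le h
  have : (a :: l).drop 1 = l := rfl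
  rw [this, lastW_cons hl, mem_last_iff hl]
  simp [intStates]

lemma mem_track_iff {ρ : List W} (h : 2 ≤ ρ.length) {w : W} :
    w ∈ ρ ↔ w = headW ρ ∨ w ∈ intStates ρ ∨ w = lastW ρ := by
  obtain ⟨a, l, rfl, hl⟩ := exists_cons_of_two_le h
  have h2 : 2 ≤ (a :: l).length := h
  rw [show w ∈ a :: l ↔ w = a ∨ w ∈ l by simp, mem_last_iff hl, lastW_cons hl]
  constructor
  · rintro (rfl | hw | hw)
    · exact Or.inl rfl
    · refine Or.inr (Or.inl ?_); simp [intStates, hw]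
    · exact Or.inr (Or.inr hw)
  · rintro (hw | hw | hw)
    · exact Or.inl (by simpa [headW] using hw)
    · exact Or.inr (Or.inl (by simpa [intStates] using hw))
    · exact Or.inr (Or.inr hw)

lemma descEl_eq_iff {ρ ρ' : List W} :
    descEl ρ = descEl ρ' ↔
      headW ρ = headW ρ' ∧ intStates ρ = intStates ρ' ∧ lastW ρ = lastW ρ' := by
  simp [descEl, Prod.ext_iff]

lemma mem_congr_of_descEl {ρ ρ' : List W} (h2 : 2 ≤ ρ.length) (h2' : 2 ≤ ρ'.length)
    (hd : descEl ρ = descEl ρ') {w : W} : w ∈ ρ ↔ w ∈ ρ' := by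
  obtain ⟨hh, hi, hl⟩ := descEl_eq_iff.1 hd
  rw [mem_track_iff h2, mem_track_iff h2', hh, hi, hl]

lemma headW_append {ρ : List W} (τ : List W) (h : ρ ≠ []) : headW (ρ ++ τ) = headW ρ := by
  cases ρ with
  | nil => simp at h
  | cons a l => rfl

lemma lastW_append (ρ : List W) {τ : List W} (h : τ ≠ []) : lastW (ρ ++ τ) = lastW τ := by
  have h1 : (ρ ++ τ : List W) ≠ [] := by simp [h]
  have := getLast?_eq_lastW h1
  rw [List.getLast?_append_of_ne_nil ρ h, getLast?_eq_lastW h] at this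
  exact (Option.some.inj this).symm

lemma drop_one_append {ρ : List W} (τ : List W) (h : ρ ≠ []) :
    (ρ ++ τ).drop 1 = ρ.drop 1 ++ τ := by
  cases ρ with
  | nil => simp at h
  | cons a l => rfl

lemma mem_intStates_append_right {ρ τ : List W} (h2 : 2 ≤ ρ.length) (hτ : τ ≠ []) {w : W} :
    w ∈ intStates (ρ ++ τ) ↔ (w ∈ intStates ρ ∨ w = lastW ρ) ∨ w ∈ τ.dropLast := by
  have hρ : ρ ≠ [] := by intro h; subst h; simp at h2
  have : intStates (ρ ++ τ) = {w | w ∈ ρ.drop 1 ++ τ.dropLast} := by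
    rw [intStates, drop_one_append τ hρ, List.dropLast_append_of_ne_nil hτ]
  rw [this]
  simp only [Set.mem_setOf_eq, List.mem_append]
  rw [mem_drop_one_iff h2]

lemma mem_intStates_append_left {ρ τ : List W} (h2 : 2 ≤ ρ.length) (hτ : τ ≠ []) {w : W} :
    w ∈ intStates (τ ++ ρ) ↔ w ∈ τ.drop 1 ∨ (w = headW ρ ∨ w ∈ intStates ρ) := by
  have hρ : ρ ≠ [] := by intro h; subst h; simp at h2
  have : intStates (τ ++ ρ) = {w | w ∈ τ.drop 1 ++ ρ.dropLast} := by
    rw [intStates, drop_one_append ρ hτ, List.dropLast_append_of_ne_nil hρ]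
  rw [this]
  simp only [Set.mem_setOf_eq, List.mem_append]
  rw [mem_dropLast_iff h2]

lemma descEl_append_right {ρ ρ' : List W} (τ : List W) (h2 : 2 ≤ ρ.length)
    (h2' : 2 ≤ ρ'.length) (h : descEl ρ = descEl ρ') :
    descEl (ρ ++ τ) = descEl (ρ' ++ τ) := by
  rcases eq_or_ne τ [] with rfl | hτ
  · simpa using h
  obtain ⟨hh, hi, hl⟩ := descEl_eq_iff.1 h
  have hρ : ρ ≠ [] := by intro h; subst h; simp at h2
  have hρ' : ρ' ≠ [] := by intro h; subst h; simp at h2'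
  rw [descEl_eq_iff]
  refine ⟨?_, ?_, ?_⟩
  · rw [headW_append τ hρ, headW_append τ hρ', hh]
  · ext w
    rw [mem_intStates_append_right h2 hτ, mem_intStates_append_right h2' hτ, hi, hl]
  · rw [lastW_append ρ hτ, lastW_append ρ' hτ]

lemma descEl_append_left {ρ ρ' : List W} (τ : List W) (h2 : 2 ≤ ρ.length)
    (h2' : 2 ≤ ρ'.length) (h : descEl ρ = descEl ρ') :
    descEl (τ ++ ρ) = descEl (τ ++ ρ') := by
  rcases eq_or_ne τ [] with rfl | hτ
  · simpa using h
  obtain ⟨hh, hi, hl⟩ := descEl_eq_iff.1 h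
  have hρ : ρ ≠ [] := by intro h; subst h; simp at h2
  have hρ' : ρ' ≠ [] := by intro h; subst h; simp at h2'
  rw [descEl_eq_iff]
  refine ⟨?_, ?_, ?_⟩
  · rw [headW_append ρ hτ, headW_append ρ' hτ]
  · ext w
    rw [mem_intStates_append_left h2 hτ, mem_intStates_append_left h2' hτ, hh, hi]
  · rw [lastW_append τ hρ, lastW_append τ hρ', hl]

lemma bDesc_fst {k : ℕ} {ρ ρ' : List W} (h : bDesc k ρ = bDesc k ρ') :
    descEl ρ = descEl ρ' := by
  cases k with
  | zero => exact h
  | succ k => exact congrArg (Prod.fst (α := DescEl W) (β := Set (BDesc W k))) h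

lemma bDesc_snd {k : ℕ} {ρ ρ' : List W} (h : bDesc (k + 1) ρ = bDesc (k + 1) ρ') :
    {d | ∃ σ, ProperPrefix σ ρ ∧ d = bDesc k σ} =
      {d | ∃ σ, ProperPrefix σ ρ' ∧ d = bDesc k σ} :=
  congrArg (Prod.snd (α := DescEl W) (β := Set (BDesc W k))) h

lemma bDesc_pair {k : ℕ} {ρ ρ' : List W} (h1 : descEl ρ = descEl ρ')
    (h2 : {d | ∃ σ, ProperPrefix σ ρ ∧ d = bDesc k σ} =
        {d | ∃ σ, ProperPrefix σ ρ' ∧ d = bDesc k σ}) :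
    bDesc (k + 1) ρ = bDesc (k + 1) ρ' := by
  have e1 : bDesc (k + 1) ρ =
      ((descEl ρ, {d | ∃ σ, ProperPrefix σ ρ ∧ d = bDesc k σ}) :
        DescEl W × Set (BDesc W k)) := rfl
  have e2 : bDesc (k + 1) ρ' =
      ((descEl ρ', {d | ∃ σ, ProperPrefix σ ρ' ∧ d = bDesc k σ}) :
        DescEl W × Set (BDesc W k)) := rfl
  rw [e1, e2, h1, h2]

lemma exists_prefix_match {k : ℕ} {ρ ρ' σ : List W}
    (hs : {d | ∃ σ, ProperPrefix σ ρ ∧ d = bDesc k σ} =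
        {d | ∃ σ, ProperPrefix σ ρ' ∧ d = bDesc k σ})
    (hσ : ProperPrefix σ ρ) :
    ∃ σ', ProperPrefix σ' ρ' ∧ bDesc k σ = bDesc k σ' := by
  have : bDesc k σ ∈ {d | ∃ σ, ProperPrefix σ ρ ∧ d = bDesc k σ} := ⟨σ, hσ, rfl⟩
  rw [hs] at this
  obtain ⟨σ', h1, h2⟩ := this
  exact ⟨σ', h1, h2⟩

lemma bDesc_mono : ∀ (k : ℕ) (ρ ρ' : List W),
    bDesc (k + 1) ρ = bDesc (k + 1) ρ' → bDesc k ρ = bDesc k ρ' := by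
  intro k
  induction k with
  | zero => intro ρ ρ' h; exact bDesc_fst h
  | succ k ih =>
    intro ρ ρ' h
    refine bDesc_pair (bDesc_fst h) ?_
    have hs := bDesc_snd h
    have key : ∀ α β : List W,
        {d | ∃ σ, ProperPrefix σ α ∧ d = bDesc (k + 1) σ} =
          {d | ∃ σ, ProperPrefix σ β ∧ d = bDesc (k + 1) σ} →
        {d | ∃ σ, ProperPrefix σ α ∧ d = bDesc k σ} ⊆
          {d | ∃ σ, ProperPrefix σ β ∧ d = bDesc k σ} := by
      rintro α β hab d ⟨σ, hσ, rfl⟩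
      obtain ⟨σ', h1, h2⟩ := exists_prefix_match hab hσ
      exact ⟨σ', h1, ih σ σ' h2⟩
    exact Set.Subset.antisymm (key _ _ hs) (key _ _ hs.symm)

lemma ne_append_of_ne_nil {β τ : List W} (hτ : τ ≠ []) : β ≠ β ++ τ := by
  simp [List.self_eq_append_right, hτ]

lemma bDesc_append_right : ∀ (k : ℕ) (ρ ρ' τ : List W), 2 ≤ ρ.length → 2 ≤ ρ'.length →
    bDesc k ρ = bDesc k ρ' → bDesc k (ρ ++ τ) = bDesc k (ρ' ++ τ) := by
  intro k
  induction k with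
  | zero => intro ρ ρ' τ h2 h2' h; exact descEl_append_right τ h2 h2' h
  | succ k ih =>
    intro ρ ρ' τ h2 h2' h
    rcases eq_or_ne τ [] with rfl | hτ
    · simpa using h
    refine bDesc_pair (descEl_append_right τ h2 h2' (bDesc_fst h)) ?_
    have key : ∀ α β : List W, 2 ≤ α.length → 2 ≤ β.length →
        bDesc (k + 1) α = bDesc (k + 1) β →
        {d | ∃ σ, ProperPrefix σ (α ++ τ) ∧ d = bDesc k σ} ⊆
          {d | ∃ σ, ProperPrefix σ (β ++ τ) ∧ d = bDesc k σ} := by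
      rintro α β hα hβ hab d ⟨σ, ⟨hpre, hne, hlen⟩, rfl⟩
      by_cases hle : σ.length ≤ α.length
      · have hσα : σ <+: α :=
          List.prefix_of_prefix_length_le hpre (α.prefix_append τ) hle
        rcases eq_or_ne σ α with rfl | hne2
        · exact ⟨β, ⟨β.prefix_append τ, ne_append_of_ne_nil hτ, hβ⟩,
            bDesc_mono k _ _ hab⟩
        · obtain ⟨σ', h1, hmatch⟩ := exists_prefix_match (bDesc_snd hab)
            ⟨hσα, hne2, hlen⟩
          refine ⟨σ', ⟨h1.1.trans (β.prefix_append τ), ?_, h1.2.2⟩, hmatch⟩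
          intro hEq
          have hl1 : σ'.length ≤ β.length := h1.1.length_le
          have hl2 : σ'.length = β.length + τ.length := by
            rw [hEq]; simp
          have : τ.length ≠ 0 := by simpa using hτ
          omega
      · push_neg at hle
        have hασ : α <+: σ :=
          List.prefix_of_prefix_length_le (α.prefix_append τ) hpre hle.le
        obtain ⟨t, rfl⟩ := hασ
        have htτ : t <+: τ := (List.prefix_append_right_inj α).1 hpre
        refine ⟨β ++ t, ⟨(List.prefix_append_right_inj β).2 htτ, ?_, ?_⟩,
          ih α β t hα hβ (bDesc_mono k _ _ hab)⟩
        · intro hEq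
          exact hne (by rw [List.append_cancel_left hEq])
        · have : 2 ≤ β.length := hβ
          simp only [List.length_append]; omega
    have hs1 := key ρ ρ' h2 h2' h
    have hs2 := key ρ' ρ h2' h2 h.symm
    exact Set.Subset.antisymm hs1 hs2

lemma take_one_eq {ρ : List W} (h2 : 2 ≤ ρ.length) : ρ.take 1 = [headW ρ] := by
  obtain ⟨a, l, rfl, hl⟩ := exists_cons_of_two_le h2
  rfl

lemma bDesc_append_left : ∀ (k : ℕ) (ρ ρ' τ : List W), 2 ≤ ρ.length → 2 ≤ ρ'.length →
    bDesc k ρ = bDesc k ρ' → bDesc k (τ ++ ρ) = bDesc k (τ ++ ρ') := by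
  intro k
  induction k with
  | zero => intro ρ ρ' τ h2 h2' h; exact descEl_append_left τ h2 h2' h
  | succ k ih =>
    intro ρ ρ' τ h2 h2' h
    rcases eq_or_ne τ [] with rfl | hτ
    · simpa using h
    refine bDesc_pair (descEl_append_left τ h2 h2' (bDesc_fst h)) ?_
    have key : ∀ α β : List W, 2 ≤ α.length → 2 ≤ β.length →
        bDesc (k + 1) α = bDesc (k + 1) β →
        {d | ∃ σ, ProperPrefix σ (τ ++ α) ∧ d = bDesc k σ} ⊆
          {d | ∃ σ, ProperPrefix σ (τ ++ β) ∧ d = bDesc k σ} := by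
      rintro α β hα hβ hab d ⟨σ, ⟨hpre, hne, hlen⟩, rfl⟩
      by_cases hle : σ.length ≤ τ.length
      · have hστ : σ <+: τ :=
          List.prefix_of_prefix_length_le hpre (τ.prefix_append α) hle
        refine ⟨σ, ⟨hστ.trans (τ.prefix_append β), ?_, hlen⟩, rfl⟩
        intro hEq
        have h1 : σ.length ≤ τ.length := hle
        have h2 : σ.length = τ.length + β.length := by rw [hEq]; simp
        omega
      · push_neg at hle
        have hτσ : τ <+: σ :=
          List.prefix_of_prefix_length_le (τ.prefix_append α) hpre hle.le
        obtain ⟨t, rfl⟩ := hτσ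
        have htα : t <+: α := (List.prefix_append_right_inj τ).1 hpre
        have htne : t ≠ [] := by
          intro hEq
          subst hEq
          simp at hle
        by_cases ht2 : 2 ≤ t.length
        · have htneα : t ≠ α := by
            intro hEq; exact hne (by rw [hEq])
          obtain ⟨t', h1, hmatch⟩ := exists_prefix_match (bDesc_snd hab)
            ⟨htα, htneα, ht2⟩
          refine ⟨τ ++ t', ⟨(List.prefix_append_right_inj τ).2 h1.1, ?_, ?_⟩,
            ih t t' τ ht2 h1.2.2 hmatch⟩
          · intro hEq
            exact h1.2.1 (List.append_cancel_left hEq)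
          · simp only [List.length_append]
            have := h1.2.2; omega
        · have ht1 : t.length = 1 := by
            have : t.length ≠ 0 := by simpa using htne
            omega
          have hth : t = α.take 1 := by
            rw [List.prefix_iff_eq_take.1 htα, ht1]
          have hhead : headW α = headW β :=
            (descEl_eq_iff.1 (bDesc_fst hab)).1
          have htβ : t = β.take 1 := by
            rw [hth, take_one_eq hα, take_one_eq hβ, hhead]
          refine ⟨τ ++ t, ⟨?_, ?_, hlen⟩, rfl⟩
          · rw [htβ]
            exact (List.prefix_append_right_inj τ).2 (List.take_prefix 1 β)
          · intro hEq
            have := List.append_cancel_left hEq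
            rw [this] at ht1
            omega
    have hs1 := key ρ ρ' h2 h2' h
    have hs2 := key ρ' ρ h2' h2 h.symm
    exact Set.Subset.antisymm hs1 hs2

lemma ne_nil_of_two_le {ρ : List W} (h : 2 ≤ ρ.length) : ρ ≠ [] := by
  intro hEq; subst hEq; simp at h

lemma sat_mono_of_bDesc_eq (K : KripkeStructure AP W) :
    ∀ (ψ : HSFormula AP) (k : ℕ), nestB ψ ≤ k → ∀ ρ ρ' : List W,
      IsTrack K ρ → IsTrack K ρ' → bDesc k ρ = bDesc k ρ' →
      sat K ψ ρ → sat K ψ ρ' := by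
  intro ψ
  induction ψ with
  | prop p =>
    intro k _ ρ ρ' hρ hρ' he hs w hw
    exact hs w ((mem_congr_of_descEl hρ.1 hρ'.1 (bDesc_fst he)).2 hw)
  | neg φ ih =>
    intro k hk ρ ρ' hρ hρ' he hs hcon
    exact hs (ih k (by simpa [nestB] using hk) ρ' ρ hρ' hρ he.symm hcon)
  | and φ χ ihφ ihχ =>
    intro k hk ρ ρ' hρ hρ' he hs
    simp only [nestB, max_le_iff] at hk
    exact ⟨ihφ k hk.1 ρ ρ' hρ hρ' he hs.1, ihχ k hk.2 ρ ρ' hρ hρ' he hs.2⟩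
  | modA φ ih =>
    intro k _ ρ ρ' hρ hρ' he hs
    obtain ⟨σ, h1, h2, h3⟩ := hs
    refine ⟨σ, h1, ?_, h3⟩
    rw [h2, getLast?_congr (ne_nil_of_two_le hρ.1) (ne_nil_of_two_le hρ'.1)
      (descEl_eq_iff.1 (bDesc_fst he)).2.2]
  | modAbar φ ih =>
    intro k _ ρ ρ' hρ hρ' he hs
    obtain ⟨σ, h1, h2, h3⟩ := hs
    refine ⟨σ, h1, ?_, h3⟩
    rw [h2, head?_congr (ne_nil_of_two_le hρ.1) (ne_nil_of_two_le hρ'.1)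
      (descEl_eq_iff.1 (bDesc_fst he)).1]
  | modB φ ih =>
    intro k hk ρ ρ' hρ hρ' he hs
    obtain ⟨σ, hσ, hsat⟩ := hs
    cases k with
    | zero => simp [nestB] at hk
    | succ k =>
      obtain ⟨σ', h1, h2⟩ := exists_prefix_match (bDesc_snd he) hσ
      have hkφ : nestB φ ≤ k := by simp [nestB] at hk; omega
      refine ⟨σ', h1, ih k hkφ σ σ' ⟨hσ.2.2, hρ.2.prefix hσ.1⟩
        ⟨h1.2.2, hρ'.2.prefix h1.1⟩ h2 hsat⟩
  | modBbar φ ih =>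
    intro k hk ρ ρ' hρ hρ' he hs
    obtain ⟨σ, hσtr, ⟨hpre, hne, _⟩, hsat⟩ := hs
    obtain ⟨t, rfl⟩ := hpre
    have ht : t ≠ [] := by rintro rfl; simp at hne
    have hlen' : 2 ≤ (ρ' ++ t).length := by
      have := hρ'.1; simp only [List.length_append]; omega
    have htr' : IsTrack K (ρ' ++ t) := by
      refine ⟨hlen', ?_⟩
      have hc := List.isChain_append.1 hσtr.2
      refine List.isChain_append.2 ⟨hρ'.2, hc.2.1, ?_⟩
      rw [getLast?_congr (ne_nil_of_two_le hρ'.1) (ne_nil_of_two_le hρ.1)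
        (descEl_eq_iff.1 (bDesc_fst he)).2.2.symm]
      exact hc.2.2
    have he' : bDesc k (ρ ++ t) = bDesc k (ρ' ++ t) :=
      bDesc_append_right k ρ ρ' t hρ.1 hρ'.1 he
    refine ⟨ρ' ++ t, htr', ⟨ρ'.prefix_append t, ne_append_of_ne_nil ht, hρ'.1⟩,
      ih k (by simpa [nestB] using hk) (ρ ++ t) (ρ' ++ t) hσtr htr' he' hsat⟩
  | modEbar φ ih =>
    intro k hk ρ ρ' hρ hρ' he hs
    obtain ⟨σ, hσtr, ⟨hsuf, hne, _⟩, hsat⟩ := hs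
    obtain ⟨t, rfl⟩ := hsuf
    have ht : t ≠ [] := by rintro rfl; simp at hne
    have hlen' : 2 ≤ (t ++ ρ').length := by
      have := hρ'.1; simp only [List.length_append]; omega
    have htr' : IsTrack K (t ++ ρ') := by
      refine ⟨hlen', ?_⟩
      have hc := List.isChain_append.1 hσtr.2
      refine List.isChain_append.2 ⟨hc.1, hρ'.2, ?_⟩
      rw [head?_congr (ne_nil_of_two_le hρ'.1) (ne_nil_of_two_le hρ.1)
        (descEl_eq_iff.1 (bDesc_fst he)).1.symm]
      exact hc.2.2
    have he' : bDesc k (t ++ ρ) = bDesc k (t ++ ρ') :=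
      bDesc_append_left k ρ ρ' t hρ.1 hρ'.1 he
    have hproper : ProperSuffix ρ' (t ++ ρ') := by
      refine ⟨⟨t, rfl⟩, ?_, hρ'.1⟩
      intro hEq
      have := congrArg List.length hEq
      simp only [List.length_append] at this
      have : t.length = 0 := by omega
      exact ht (List.length_eq_zero_iff.1 this)
    exact ⟨t ++ ρ', htr', hproper,
      ih k (by simpa [nestB] using hk) (t ++ ρ) (t ++ ρ') hσtr htr' he' hsat⟩

end DescriptorLemmas
/-- if two tracks have the same B_k-descriptor, then they satisfy the
same AĀBB̄Ē formulas of B-nesting depth `k`. -/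
theorem sat_of_bDesc_eq [Fintype W] [Nonempty W] (K : KripkeStructure AP W)
    (ρ ρ' : List W) (hρ : IsTrack K ρ) (hρ' : IsTrack K ρ')
    (ψ : HSFormula AP) (k : ℕ) (hk : nestB ψ = k)
    (he : bDesc k ρ = bDesc k ρ') :
    sat K ψ ρ ↔ sat K ψ ρ' :=
  ⟨sat_mono_of_bDesc_eq K ψ k hk.le ρ ρ' hρ hρ' he,
   sat_mono_of_bDesc_eq K ψ k hk.le ρ' ρ hρ' hρ he.symm⟩
end

section
/- Let ρ_ds be the descriptor sequence for a track ρ of a finite Kripke structure, and let ρ_ds(i) and ρ_ds(j), with 0 ≤ i < j < |ρ_ds|, be two occurrences of the same descriptor element. For every k ≥ 1, ρ_ds(i) and ρ_ds(j) are k-indistinguishable if and only if the prefixes ρ(0,i+1) and ρ(0,j+1) have the same B_k-descriptor (ρ(0,i+1) ∼k ρ(0,j+1)). -/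
open Classical

universe u v

variable {AP : Type u} {W : Type v}

/-- The descriptor sequence of a track: `dsSeq ρ i` is the descriptor element of
the prefix `ρ(0, i+1)` of `ρ` (positions `0 ≤ i < |ρ| - 1`). -/
noncomputable def dsSeq [Nonempty W] (ρ : List W) (i : ℕ) : DescEl W :=
  descEl (ρ.take (i + 2))

/-- `DElm(ρ_ds(0, i-1))`: the descriptor elements occurring at positions `< i`. -/
noncomputable def DElmUpTo [Nonempty W] (ρ : List W) (i : ℕ) : Set (DescEl W) :=
  {d | ∃ ℓ < i, dsSeq ρ ℓ = d}

/-- k-indistinguishability of the occurrences at positions `i < j` of the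
descriptor sequence of `ρ` (defined for `k ≥ 1`). -/
def Indist [Nonempty W] (ρ : List W) : ℕ → ℕ → ℕ → Prop
  | 0, _, _ => False
  | 1, i, j => i < j ∧ j < ρ.length - 1 ∧ dsSeq ρ i = dsSeq ρ j ∧
      DElmUpTo ρ i = DElmUpTo ρ j
  | k + 2, i, j => i < j ∧ j < ρ.length - 1 ∧ dsSeq ρ i = dsSeq ρ j ∧
      ∀ ℓ, i ≤ ℓ → ℓ < j → ∃ ℓ' < i, Indist ρ (k + 1) ℓ' ℓ

lemma take_properPrefix (ρ : List W) (m : ℕ) (hm : m + 2 ≤ ρ.length)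
    (σ : List W) : ProperPrefix σ (ρ.take (m+2)) ↔ ∃ ℓ < m, σ = ρ.take (ℓ+2) := by
  constructor
  · rintro ⟨hpre, hne, hlen⟩
    have h1 : σ.length ≤ m + 2 := by
      have h := hpre.length_le
      have h2 : (ρ.take (m+2)).length = m + 2 := by rw [List.length_take]; omega
      omega
    have hσ : σ = ρ.take σ.length :=
      List.prefix_iff_eq_take.mp (hpre.trans (List.take_prefix _ _))
    have hlt : σ.length < m + 2 := by
      rcases Nat.lt_or_ge σ.length (m+2) with h | h
      · exact h
      · exfalso; apply hne
        have hl : σ.length = m + 2 := le_antisymm h1 h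
        rw [hσ, hl]
    exact ⟨σ.length - 2, by omega, by
      rw [show σ.length - 2 + 2 = σ.length by omega]; exact hσ⟩
  · rintro ⟨ℓ, hℓ, rfl⟩
    have hlt : (ρ.take (ℓ+2)).length = ℓ + 2 := by
      rw [List.length_take]; omega
    have hmt : (ρ.take (m+2)).length = m + 2 := by
      rw [List.length_take]; omega
    refine ⟨?_, ?_, ?_⟩
    · rw [show ρ.take (ℓ+2) = (ρ.take (m+2)).take (ℓ+2) by
        rw [List.take_take]; congr 1; omega]
      exact List.take_prefix _ _
    · intro h
      rw [h, hmt] at hlt; omega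
    · omega

lemma descEl_of_bDesc [Nonempty W] {k : ℕ} {σ τ : List W}
    (h : bDesc k σ = bDesc k τ) : descEl σ = descEl τ := by
  cases k with
  | zero => exact h
  | succ k => exact congrArg Prod.fst h

lemma indist_basic [Nonempty W] {ρ : List W} {k a b : ℕ} (h : Indist ρ (k+1) a b) :
    a < b ∧ b < ρ.length - 1 ∧ dsSeq ρ a = dsSeq ρ b := by
  cases k with
  | zero => exact ⟨h.1, h.2.1, h.2.2.1⟩
  | succ k => exact ⟨h.1, h.2.1, h.2.2.1⟩

lemma bdesc_prefix_set [Nonempty W] (ρ : List W) (k m : ℕ) (hm : m + 2 ≤ ρ.length) :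
    {d | ∃ σ, ProperPrefix σ (ρ.take (m+2)) ∧ d = bDesc k σ}
      = {d | ∃ ℓ < m, d = bDesc k (ρ.take (ℓ+2))} := by
  ext d
  simp only [Set.mem_setOf_eq]
  constructor
  · rintro ⟨σ, hσ, rfl⟩
    obtain ⟨ℓ, hℓ, rfl⟩ := (take_properPrefix ρ m hm σ).mp hσ
    exact ⟨ℓ, hℓ, rfl⟩
  · rintro ⟨ℓ, hℓ, rfl⟩
    exact ⟨_, (take_properPrefix ρ m hm _).mpr ⟨ℓ, hℓ, rfl⟩, rfl⟩

lemma bDesc_succ [Nonempty W] (k : ℕ) (ρ : List W) :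
    bDesc (k+1) ρ = (descEl ρ, {d | ∃ σ, ProperPrefix σ ρ ∧ d = bDesc k σ}) := rfl

lemma DElmUpTo_eq [Nonempty W] (ρ : List W) (m : ℕ) :
    DElmUpTo ρ m = {d | ∃ ℓ < m, d = bDesc 0 (ρ.take (ℓ+2))} := by
  ext d
  simp only [DElmUpTo, Set.mem_setOf_eq, bDesc]
  constructor
  · rintro ⟨ℓ, hℓ, rfl⟩; exact ⟨ℓ, hℓ, rfl⟩
  · rintro ⟨ℓ, hℓ, rfl⟩; exact ⟨ℓ, hℓ, rfl⟩

/-- two occurrences `ρ_ds(i)` and `ρ_ds(j)` (`i < j`) of the same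
descriptor element are k-indistinguishable iff the prefixes `ρ(0, i+1)` and
`ρ(0, j+1)` have the same B_k-descriptor. -/
theorem indist_iff_bDesc [Fintype W] [Nonempty W] (K : KripkeStructure AP W)
    (ρ : List W) (hρ : IsTrack K ρ) (k i j : ℕ) (hk : 1 ≤ k)
    (hij : i < j) (hj : j < ρ.length - 1) (he : dsSeq ρ i = dsSeq ρ j) :
    Indist ρ k i j ↔ bDesc k (ρ.take (i + 2)) = bDesc k (ρ.take (j + 2)) := by
  have hlen : 2 ≤ ρ.length := hρ.1
  obtain ⟨n, rfl⟩ : ∃ n, k = n + 1 := ⟨k - 1, by omega⟩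
  clear hk
  induction n generalizing i j hij hj he with
  | zero =>
    have hj2 : j + 2 ≤ ρ.length := by omega
    have hi2 : i + 2 ≤ ρ.length := by omega
    simp only [Indist]
    rw [bDesc_succ, bDesc_succ,
      bdesc_prefix_set ρ 0 i hi2, bdesc_prefix_set ρ 0 j hj2,
      ← DElmUpTo_eq, ← DElmUpTo_eq]
    conv_rhs => change ((descEl (ρ.take (i+2)), DElmUpTo ρ i) : DescEl W × Set (DescEl W)) = (descEl (ρ.take (j+2)), DElmUpTo ρ j); rw [Prod.mk.injEq]
    constructor
    · rintro ⟨-, -, h1, h2⟩; exact ⟨h1, h2⟩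
    · rintro ⟨h1, h2⟩; exact ⟨hij, hj, h1, h2⟩
  | succ n ih =>
    have hj2 : j + 2 ≤ ρ.length := by omega
    have hi2 : i + 2 ≤ ρ.length := by omega
    simp only [Indist]
    rw [bDesc_succ (n+1), bDesc_succ (n+1),
      bdesc_prefix_set ρ (n+1) i hi2, bdesc_prefix_set ρ (n+1) j hj2]
    conv_rhs => change ((_ : DescEl W × Set (BDesc W (n+1))) = _); rw [Prod.mk.injEq]
    constructor
    · rintro ⟨-, -, -, hall⟩
      refine ⟨he, ?_⟩
      ext d
      simp only [Set.mem_setOf_eq]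
      constructor
      · rintro ⟨ℓ, hℓ, rfl⟩; exact ⟨ℓ, by omega, rfl⟩
      · rintro ⟨ℓ, hℓ, rfl⟩
        by_cases hcase : ℓ < i
        · exact ⟨ℓ, hcase, rfl⟩
        · obtain ⟨ℓ', hℓ', hind⟩ := hall ℓ (by omega) hℓ
          obtain ⟨hlt, hb, heq⟩ := indist_basic hind
          exact ⟨ℓ', hℓ', ((ih ℓ' ℓ hlt hb heq).mp hind).symm⟩
    · rintro ⟨-, hset⟩
      refine ⟨hij, hj, he, ?_⟩
      intro ℓ hiℓ hℓj
      have hmem : bDesc (n+1) (ρ.take (ℓ+2)) ∈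
          {d | ∃ ℓ' < j, d = bDesc (n+1) (ρ.take (ℓ'+2))} := ⟨ℓ, hℓj, rfl⟩
      rw [← hset] at hmem
      obtain ⟨ℓ', hℓ', hb⟩ := hmem
      have hds : dsSeq ρ ℓ' = dsSeq ρ ℓ := descEl_of_bDesc hb.symm
      have hll : ℓ' < ℓ := lt_of_lt_of_le hℓ' hiℓ
      exact ⟨ℓ', hℓ', (ih ℓ' ℓ hll (by omega) hds).mpr hb.symm⟩
end
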